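/- Let X be a real n×p matrix, let β ∈ ℝ^p with support T = {j : β_j ≠ 0}, let z ∈ ℝⁿ with z_i ≠ 0 for all i, and set Y = Xβ + z. Let c > 1 and let λ > 0 satisfy λ ≥ c·‖Xᵀ sign(z)‖_∞, where sign(z) = (sign(z_1),…,sign(z_n))ᵀ. Then every minimizer β̂ of γ ↦ ‖Y − Xγ‖₁ + λ‖γ‖₁ satisfies ‖h_T‖₁ ≥ ((c−1)/(c+1))·‖h_{T^c}‖₁, where h = β̂ − β and for a set E ⊆ {1,…,p}, h_E denotes the vector agreeing with h on E and equal to 0 off E. -/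

import Mathlib

/-- **Cone (restricted set) property of the L1 penalized LAD estimator.**
If `Y = Xβ + z`, `z_i ≠ 0` for all `i`, `c > 1` and `λ ≥ c ‖Xᵀ sign(z)‖_∞`, then any
minimizer `β̂` of `γ ↦ ‖Y - Xγ‖₁ + λ ‖γ‖₁` satisfies
`‖h_T‖₁ ≥ ((c-1)/(c+1)) ‖h_{T^c}‖₁` for `h = β̂ - β` and `T = supp(β)`. -/
theorem cone_property
    (n p : ℕ) (X : Matrix (Fin n) (Fin p) ℝ)
    (β : Fin p → ℝ) (z : Fin n → ℝ) (hz : ∀ i, z i ≠ 0)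
    (c : ℝ) (hc : 1 < c) (lam : ℝ) (hlam0 : 0 < lam)
    (hlam : ∀ j : Fin p, c * |∑ i, X i j * Real.sign (z i)| ≤ lam)
    (bhat : Fin p → ℝ)
    (hmin : ∀ γ : Fin p → ℝ,
        (∑ i, |(X.mulVec β i + z i) - X.mulVec bhat i|) + lam * ∑ j, |bhat j| ≤
        (∑ i, |(X.mulVec β i + z i) - X.mulVec γ i|) + lam * ∑ j, |γ j|) :
    (c - 1) / (c + 1) * ∑ j, (if β j = 0 then |bhat j - β j| else 0) ≤
      ∑ j, (if β j ≠ 0 then |bhat j - β j| else 0) := by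
  set h : Fin p → ℝ := fun j => bhat j - β j with hhdef
  set A : ℝ := ∑ j, (if β j = 0 then |bhat j - β j| else 0) with hAdef
  set B : ℝ := ∑ j, (if β j ≠ 0 then |bhat j - β j| else 0) with hBdef
  have hc0 : (0:ℝ) < c := by linarith
  -- A + B = ∑ |h j|
  have hAB : A + B = ∑ j, |h j| := by
    rw [hAdef, hBdef, ← Finset.sum_add_distrib]
    refine Finset.sum_congr rfl fun j _ => ?_
    by_cases hj : β j = 0 <;> simp [hj, hhdef]
  -- from minimality at β
  have hmin' := hmin β
  have hzb : ∀ i, (X.mulVec β i + z i) - X.mulVec β i = z i := by intro i; ring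
  simp only [hzb] at hmin'
  have hres : ∀ i, (X.mulVec β i + z i) - X.mulVec bhat i = z i - X.mulVec h i := by
    intro i
    have : X.mulVec h i = X.mulVec bhat i - X.mulVec β i := by
      simp [hhdef, Matrix.mulVec, dotProduct, mul_sub, Finset.sum_sub_distrib]
    rw [this]; ring
  simp only [hres] at hmin'
  -- pointwise lower bound on residual
  have hpt : ∀ i, |z i| - Real.sign (z i) * X.mulVec h i ≤ |z i - X.mulVec h i| := by
    intro i
    have hs : Real.sign (z i) * z i = |z i| := by
      rcases lt_or_gt_of_ne (hz i) with hzi | hzi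
      · rw [Real.sign_of_neg hzi, abs_of_neg hzi]; ring
      · rw [Real.sign_of_pos hzi, abs_of_pos hzi]; ring
    have habs : |Real.sign (z i)| ≤ 1 := by
      rcases lt_or_gt_of_ne (hz i) with hzi | hzi
      · rw [Real.sign_of_neg hzi]; norm_num
      · rw [Real.sign_of_pos hzi]; norm_num
    calc |z i| - Real.sign (z i) * X.mulVec h i
        = Real.sign (z i) * (z i - X.mulVec h i) := by rw [mul_sub, hs]
      _ ≤ |Real.sign (z i) * (z i - X.mulVec h i)| := le_abs_self _
      _ = |Real.sign (z i)| * |z i - X.mulVec h i| := abs_mul _ _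
      _ ≤ 1 * |z i - X.mulVec h i| := by
          exact mul_le_mul_of_nonneg_right habs (abs_nonneg _)
      _ = |z i - X.mulVec h i| := one_mul _
  have hsum1 : ∑ i, |z i| - ∑ i, Real.sign (z i) * X.mulVec h i ≤
      ∑ i, |z i - X.mulVec h i| := by
    rw [← Finset.sum_sub_distrib]
    exact Finset.sum_le_sum fun i _ => hpt i
  -- swap sums
  have hswap : ∑ i, Real.sign (z i) * X.mulVec h i =
      ∑ j, h j * ∑ i, X i j * Real.sign (z i) := by
    simp only [Matrix.mulVec, dotProduct, Finset.mul_sum, Finset.sum_mul]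
    rw [Finset.sum_comm]
    refine Finset.sum_congr rfl fun j _ => Finset.sum_congr rfl fun i _ => by ring
  -- bound the cross term
  have hcross : ∑ j, h j * ∑ i, X i j * Real.sign (z i) ≤ lam / c * (A + B) := by
    rw [hAB, Finset.mul_sum]
    refine Finset.sum_le_sum fun j _ => ?_
    have h1 : |∑ i, X i j * Real.sign (z i)| ≤ lam / c := by
      rw [le_div_iff₀ hc0]
      have := hlam j
      linarith [this]
    calc h j * ∑ i, X i j * Real.sign (z i)
        ≤ |h j * ∑ i, X i j * Real.sign (z i)| := le_abs_self _
      _ = |h j| * |∑ i, X i j * Real.sign (z i)| := abs_mul _ _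
      _ ≤ |h j| * (lam / c) := mul_le_mul_of_nonneg_left h1 (abs_nonneg _)
      _ = lam / c * |h j| := mul_comm _ _
  -- A - B ≤ ‖bhat‖₁ - ‖β‖₁
  have hABnorm : A - B ≤ (∑ j, |bhat j|) - ∑ j, |β j| := by
    rw [hAdef, hBdef, ← Finset.sum_sub_distrib, ← Finset.sum_sub_distrib]
    refine Finset.sum_le_sum fun j _ => ?_
    by_cases hj : β j = 0
    · simp [hj]
    · simp only [hj, if_neg, Ne, not_false_iff, if_true, if_false]
      have := abs_sub_abs_le_abs_sub (β j) (bhat j)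
      rw [abs_sub_comm] at this
      linarith
  -- combine
  have hmain : lam * (A - B) ≤ lam / c * (A + B) := by
    have h2 : lam * ((∑ j, |bhat j|) - ∑ j, |β j|) ≤
        ∑ i, |z i| - ∑ i, |z i - X.mulVec h i| := by linarith [hmin']
    have h3 : ∑ i, |z i| - ∑ i, |z i - X.mulVec h i| ≤
        ∑ i, Real.sign (z i) * X.mulVec h i := by linarith [hsum1]
    have h4 : lam * (A - B) ≤ lam * ((∑ j, |bhat j|) - ∑ j, |β j|) :=
      mul_le_mul_of_nonneg_left hABnorm hlam0.le
    rw [hswap] at h3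
    linarith
  -- finish: c*(A-B) ≤ A+B
  have hfin : (c - 1) * A ≤ (c + 1) * B := by
    have := mul_le_mul_of_nonneg_left hmain (le_of_lt (by positivity : (0:ℝ) < c / lam))
    have hcl : c / lam * (lam * (A - B)) = c * (A - B) := by
      field_simp
    have hcr : c / lam * (lam / c * (A + B)) = A + B := by
      field_simp
    rw [hcl, hcr] at this
    nlinarith
  rw [div_mul_eq_mul_div, div_le_iff₀ (by linarith : (0:ℝ) < c + 1)]
  linarith
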